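/- Let d ≥ 2, z ∈ 𝔽_q \ {0}, E ⊆ 𝔽_q^d, and Θ ⊆ 𝔽_q^{d−1} nonempty. Then there exists θ ∈ Θ such that |{v·(θ,z) : v ∈ E}| ≥ q·|E|·|Θ| / (q^d + |E|·|Θ|), where (θ,z) denotes the vector in 𝔽_q^d with first d−1 coordinates θ and last coordinate z. -/

import Mathlib

open Finset

section Aux
variable {F : Type*} [Field F] [Fintype F] [DecidableEq F]

lemma aux_sum_single_mul {n : ℕ} (c : Fin n → F) (i0 : Fin n) (x : F) :
    ∑ i, c i * (Pi.single i0 x : Fin n → F) i = c i0 * x := by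
  rw [Finset.sum_eq_single i0]
  · simp
  · intro i _ hi
    rw [Pi.single_eq_of_ne hi, mul_zero]
  · simp

lemma aux_fiber_card_eq {n : ℕ} (c : Fin n → F) (i0 : Fin n) (hc : c i0 ≠ 0) (b b' : F) :
    (univ.filter (fun θ : Fin n → F => ∑ i, c i * θ i = b)).card
      = (univ.filter (fun θ : Fin n → F => ∑ i, c i * θ i = b')).card := by
  apply Finset.card_nbij' (fun θ => θ + Pi.single i0 ((b' - b) / c i0))
    (fun θ => θ - Pi.single i0 ((b' - b) / c i0))
  · intro θ hθ
    simp only [mem_coe, mem_filter, mem_univ, true_and] at hθ ⊢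
    simp only [Pi.add_apply, mul_add, Finset.sum_add_distrib, hθ, aux_sum_single_mul]
    field_simp
    ring
  · intro θ hθ
    simp only [mem_coe, mem_filter, mem_univ, true_and] at hθ ⊢
    simp only [Pi.sub_apply, mul_sub, Finset.sum_sub_distrib, hθ, aux_sum_single_mul]
    field_simp
    ring
  · intro θ _
    simp
  · intro θ _
    simp

lemma aux_fiber_mul_card {n : ℕ} (c : Fin n → F) (hc : c ≠ 0) (b : F) :
    (univ.filter (fun θ : Fin n → F => ∑ i, c i * θ i = b)).card * Fintype.card F
      = Fintype.card F ^ n := by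
  obtain ⟨i0, hi0⟩ : ∃ i, c i ≠ 0 := by
    by_contra h
    push_neg at h
    exact hc (funext h)
  have h1 : (univ : Finset (Fin n → F)).card
      = ∑ b' : F, (univ.filter (fun θ : Fin n → F => ∑ i, c i * θ i = b')).card :=
    Finset.card_eq_sum_card_fiberwise (fun x _ => mem_univ _)
  rw [Finset.sum_congr rfl (fun b' _ => aux_fiber_card_eq c i0 hi0 b' b),
    Finset.sum_const, card_univ, smul_eq_mul, card_univ, Fintype.card_fun,
    Fintype.card_fin] at h1
  rw [mul_comm]
  exact h1.symm

lemma aux_pair_fiber_le {n : ℕ} (hn : 1 ≤ n) (z : F) (hz : z ≠ 0)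
    (v w : Fin (n + 1) → F) (hvw : v ≠ w) :
    (univ.filter (fun θ : Fin n → F =>
        ∑ i, v i * (Fin.snoc θ z : Fin (n + 1) → F) i
          = ∑ i, w i * (Fin.snoc θ z : Fin (n + 1) → F) i)).card
      ≤ Fintype.card F ^ (n - 1) := by
  have key : ∀ θ : Fin n → F,
      (∑ i, v i * (Fin.snoc θ z : Fin (n + 1) → F) i
          = ∑ i, w i * (Fin.snoc θ z : Fin (n + 1) → F) i)
        ↔ ∑ i, (v i.castSucc - w i.castSucc) * θ i
            = (w (Fin.last n) - v (Fin.last n)) * z := by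
    intro θ
    rw [Fin.sum_univ_castSucc, Fin.sum_univ_castSucc]
    simp only [Fin.snoc_castSucc, Fin.snoc_last, sub_mul, Finset.sum_sub_distrib]
    constructor <;> intro h <;> linear_combination h
  rw [Finset.filter_congr (fun θ _ => key θ)]
  by_cases hc : (fun i : Fin n => v i.castSucc - w i.castSucc) = 0
  · have hb : (w (Fin.last n) - v (Fin.last n)) * z ≠ 0 := by
      have hlast : v (Fin.last n) ≠ w (Fin.last n) := by
        intro h
        apply hvw
        funext i
        induction i using Fin.lastCases with
        | last => exact h
        | cast j =>
          have := congrFun hc j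
          simp only [Pi.zero_apply, sub_eq_zero] at this
          exact this
      exact mul_ne_zero (sub_ne_zero.2 (Ne.symm hlast)) hz
    rw [Finset.filter_false_of_mem]
    · simp
    · intro θ _
      have h0 : ∑ i, (v i.castSucc - w i.castSucc) * θ i = 0 :=
        Finset.sum_eq_zero (fun i _ => by rw [congrFun hc i, Pi.zero_apply, zero_mul])
      rw [h0]
      exact fun h => hb h.symm
  · have := aux_fiber_mul_card (fun i : Fin n => v i.castSucc - w i.castSucc) hc
      ((w (Fin.last n) - v (Fin.last n)) * z)
    have hq : 0 < Fintype.card F := Fintype.card_pos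
    have hpow : Fintype.card F ^ n = Fintype.card F ^ (n - 1) * Fintype.card F := by
      rw [← pow_succ, Nat.sub_add_cancel hn]
    rw [hpow] at this
    exact le_of_eq (Nat.eq_of_mul_eq_mul_right hq this)

lemma aux_pairs_eq_sum_sq {α β : Type*} [DecidableEq α] [DecidableEq β] [Fintype β]
    (s : Finset α) (g : α → β) :
    ((s ×ˢ s).filter (fun p => g p.1 = g p.2)).card
      = ∑ t, (s.filter (fun a => g a = t)).card ^ 2 := by
  rw [Finset.card_eq_sum_card_fiberwise
    (f := fun p : α × α => g p.1) (t := univ) (fun p _ => mem_univ _)]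
  refine Finset.sum_congr rfl (fun t _ => ?_)
  have : ((s ×ˢ s).filter (fun p => g p.1 = g p.2)).filter (fun p => g p.1 = t)
      = (s.filter (fun a => g a = t)) ×ˢ (s.filter (fun a => g a = t)) := by
    ext ⟨a, b⟩
    simp only [mem_filter, mem_product]
    constructor
    · rintro ⟨⟨⟨ha, hb⟩, hab⟩, hat⟩
      exact ⟨⟨ha, hat⟩, hb, hab ▸ hat⟩
    · rintro ⟨⟨ha, hat⟩, hb, hbt⟩
      exact ⟨⟨⟨ha, hb⟩, hat.trans hbt.symm⟩, hat⟩
  rw [this, Finset.card_product, sq]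

lemma aux_double_count {α β : Type*} [DecidableEq α] [DecidableEq β]
    (s : Finset α) (t : Finset β) (P : α → β → Prop) [∀ a b, Decidable (P a b)] :
    ∑ x ∈ s, (t.filter (fun y => P x y)).card
      = ∑ y ∈ t, (s.filter (fun x => P x y)).card := by
  simp only [Finset.card_filter]
  rw [Finset.sum_comm]

lemma aux_total_energy {n : ℕ} (hn : 1 ≤ n) (z : F) (hz : z ≠ 0)
    (E : Finset (Fin (n + 1) → F)) :
    ∑ θ : Fin n → F, ∑ t : F,
        (E.filter (fun v => ∑ i, v i * (Fin.snoc θ z : Fin (n + 1) → F) i = t)).card ^ 2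
      ≤ E.card * Fintype.card F ^ n + E.card ^ 2 * Fintype.card F ^ (n - 1) := by
  have h1 : ∀ θ : Fin n → F, ∑ t : F,
      (E.filter (fun v => ∑ i, v i * (Fin.snoc θ z : Fin (n + 1) → F) i = t)).card ^ 2
        = ((E ×ˢ E).filter (fun p =>
            ∑ i, p.1 i * (Fin.snoc θ z : Fin (n + 1) → F) i
              = ∑ i, p.2 i * (Fin.snoc θ z : Fin (n + 1) → F) i)).card :=
    fun θ => (aux_pairs_eq_sum_sq E
      (fun v => ∑ i, v i * (Fin.snoc θ z : Fin (n + 1) → F) i)).symm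
  calc ∑ θ : Fin n → F, ∑ t : F,
        (E.filter (fun v => ∑ i, v i * (Fin.snoc θ z : Fin (n + 1) → F) i = t)).card ^ 2
      = ∑ θ : Fin n → F, ((E ×ˢ E).filter (fun p =>
            ∑ i, p.1 i * (Fin.snoc θ z : Fin (n + 1) → F) i
              = ∑ i, p.2 i * (Fin.snoc θ z : Fin (n + 1) → F) i)).card :=
        Finset.sum_congr rfl (fun θ _ => h1 θ)
    _ = ∑ p ∈ E ×ˢ E, ((univ : Finset (Fin n → F)).filter (fun θ =>
            ∑ i, p.1 i * (Fin.snoc θ z : Fin (n + 1) → F) i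
              = ∑ i, p.2 i * (Fin.snoc θ z : Fin (n + 1) → F) i)).card := by
        rw [← aux_double_count]
    _ ≤ E.card * Fintype.card F ^ n + E.card ^ 2 * Fintype.card F ^ (n - 1) := by
        rw [← Finset.sum_filter_add_sum_filter_not (E ×ˢ E) (fun p => p.1 = p.2)]
        gcongr ?_ + ?_
        · calc ∑ p ∈ (E ×ˢ E).filter (fun p => p.1 = p.2), ((univ : Finset (Fin n → F)).filter (fun θ =>
                ∑ i, p.1 i * (Fin.snoc θ z : Fin (n + 1) → F) i
                  = ∑ i, p.2 i * (Fin.snoc θ z : Fin (n + 1) → F) i)).card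
              ≤ ∑ _p ∈ (E ×ˢ E).filter (fun p => p.1 = p.2), Fintype.card F ^ n := by
                refine Finset.sum_le_sum (fun p _ => ?_)
                calc _ ≤ (univ : Finset (Fin n → F)).card := Finset.card_filter_le _ _
                  _ = Fintype.card F ^ n := by
                      rw [card_univ, Fintype.card_fun, Fintype.card_fin]
          _ = ((E ×ˢ E).filter (fun p => p.1 = p.2)).card * Fintype.card F ^ n := by
                rw [Finset.sum_const, smul_eq_mul]
          _ ≤ E.card * Fintype.card F ^ n := by
                gcongr
                refine Finset.card_le_card_of_injOn (fun p => p.1) ?_ ?_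
                · intro p hp
                  simp only [mem_coe, mem_filter, mem_product] at hp
                  exact hp.1.1
                · intro p hp p' hp' h
                  simp only [coe_filter, Set.mem_setOf_eq, mem_product] at hp hp'
                  simp only at h
                  exact Prod.ext h (by rw [← hp.2, ← hp'.2, h])
        · calc ∑ p ∈ (E ×ˢ E).filter (fun p => ¬ p.1 = p.2), ((univ : Finset (Fin n → F)).filter (fun θ =>
                ∑ i, p.1 i * (Fin.snoc θ z : Fin (n + 1) → F) i
                  = ∑ i, p.2 i * (Fin.snoc θ z : Fin (n + 1) → F) i)).card
              ≤ ∑ _p ∈ (E ×ˢ E).filter (fun p => ¬ p.1 = p.2), Fintype.card F ^ (n - 1) := by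
                refine Finset.sum_le_sum (fun p hp => ?_)
                simp only [mem_filter, mem_product] at hp
                exact aux_pair_fiber_le hn z hz p.1 p.2 hp.2
          _ = ((E ×ˢ E).filter (fun p => ¬ p.1 = p.2)).card * Fintype.card F ^ (n - 1) := by
                rw [Finset.sum_const, smul_eq_mul]
          _ ≤ E.card ^ 2 * Fintype.card F ^ (n - 1) := by
                gcongr
                calc _ ≤ (E ×ˢ E).card := Finset.card_filter_le _ _
                  _ = E.card ^ 2 := by rw [Finset.card_product, sq]

end Aux

/-- Good direction in higher dimensions: here the dimension is `d = n + 1` with `n ≥ 1`,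
so that `d ≥ 2`, and `(θ, z) = Fin.snoc θ z` is the vector with first `d - 1`
coordinates `θ` and last coordinate `z`. -/
theorem good_direction_higher_dim
    {F : Type*} [Field F] [Fintype F] [DecidableEq F] (q : ℕ) (hq : Fintype.card F = q)
    (n : ℕ) (hn : 1 ≤ n) (z : F) (hz : z ≠ 0)
    (E : Finset (Fin (n + 1) → F)) (Θ : Finset (Fin n → F)) (hΘ : Θ.Nonempty) :
    ∃ θ ∈ Θ, ((E.image (fun v : Fin (n + 1) → F => ∑ i, v i * (Fin.snoc θ z : Fin (n + 1) → F) i)).card : ℝ)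
      ≥ (q : ℝ) * E.card * Θ.card / ((q : ℝ) ^ (n + 1) + E.card * Θ.card) := by
  obtain ⟨θex, hθex⟩ := hΘ
  rcases E.eq_empty_or_nonempty with hE | hE
  · refine ⟨θex, hθex, ?_⟩
    simp [hE]
  have hq0 : 0 < q := hq ▸ Fintype.card_pos
  have hqR : (0 : ℝ) < q := by exact_mod_cast hq0
  have hER : (0 : ℝ) < E.card := by exact_mod_cast hE.card_pos
  have hΘR : (0 : ℝ) < Θ.card := by exact_mod_cast Finset.card_pos.2 ⟨θex, hθex⟩
  -- the fiber counting function, real valued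
  set R : (Fin n → F) → F → ℝ := fun θ t =>
    ((E.filter (fun v => ∑ i, v i * (Fin.snoc θ z : Fin (n + 1) → F) i = t)).card : ℝ) with hRdef
  have hRnonneg : ∀ θ t, 0 ≤ R θ t := fun θ t => Nat.cast_nonneg _
  have hRsum : ∀ θ, ∑ t, R θ t = (E.card : ℝ) := by
    intro θ
    have h := Finset.card_eq_sum_card_fiberwise (s := E) (t := (univ : Finset F))
      (f := fun v : Fin (n + 1) → F => ∑ i, v i * (Fin.snoc θ z : Fin (n + 1) → F) i)
      (fun v _ => mem_univ _)
    rw [hRdef, ← Nat.cast_sum]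
    exact_mod_cast congrArg (Nat.cast (R := ℝ)) h.symm
  set m : ℝ := (E.card : ℝ) / q with hmdef
  set V : (Fin n → F) → ℝ := fun θ => ∑ t, (R θ t - m) ^ 2 with hVdef
  have hVnonneg : ∀ θ, 0 ≤ V θ := fun θ => Finset.sum_nonneg (fun t _ => sq_nonneg _)
  have hVid : ∀ θ, ∑ t, (R θ t) ^ 2 = V θ + (E.card : ℝ) ^ 2 / q := by
    intro θ
    have expand : V θ = (∑ t, (R θ t) ^ 2) - 2 * m * (∑ t, R θ t) + (q : ℝ) * m ^ 2 := by
      rw [hVdef]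
      simp only
      rw [Finset.sum_congr rfl
        (fun t _ => (by ring : (R θ t - m) ^ 2 = ((R θ t) ^ 2 - 2 * m * R θ t) + m ^ 2)),
        Finset.sum_add_distrib, Finset.sum_sub_distrib, ← Finset.mul_sum,
        Finset.sum_const, card_univ, nsmul_eq_mul, hq]
    rw [expand, hRsum θ, hmdef]
    field_simp
    ring
  -- total variance bound
  have hpow : (q : ℝ) ^ (n - 1) * q = (q : ℝ) ^ n := by
    rw [← pow_succ, Nat.sub_add_cancel hn]
  have hSV : ∑ θ : Fin n → F, V θ ≤ (E.card : ℝ) * (q : ℝ) ^ n := by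
    have htot : (∑ θ : Fin n → F, ∑ t, (R θ t) ^ 2)
        ≤ (E.card : ℝ) * (q : ℝ) ^ n + (E.card : ℝ) ^ 2 * (q : ℝ) ^ (n - 1) := by
      have := aux_total_energy hn z hz E
      rw [hq] at this
      have hcast : (∑ θ : Fin n → F, ∑ t, (R θ t) ^ 2)
          = ((∑ θ : Fin n → F, ∑ t : F,
              (E.filter (fun v => ∑ i, v i * (Fin.snoc θ z : Fin (n + 1) → F) i = t)).card ^ 2 : ℕ) : ℝ) := by
        push_cast [hRdef]
        rfl
      rw [hcast]
      exact_mod_cast this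
    have hsum : ∑ θ : Fin n → F, V θ
        = (∑ θ : Fin n → F, ∑ t, (R θ t) ^ 2) - (q : ℝ) ^ n * ((E.card : ℝ) ^ 2 / q) := by
      have : ∀ θ : Fin n → F, V θ = (∑ t, (R θ t) ^ 2) - (E.card : ℝ) ^ 2 / q := by
        intro θ
        rw [hVid θ]
        ring
      rw [Finset.sum_congr rfl (fun θ _ => this θ), Finset.sum_sub_distrib,
        Finset.sum_const, card_univ, Fintype.card_fun, Fintype.card_fin, hq, nsmul_eq_mul]
      push_cast
      ring
    rw [hsum]
    have : (q : ℝ) ^ n * ((E.card : ℝ) ^ 2 / q) = (E.card : ℝ) ^ 2 * (q : ℝ) ^ (n - 1) := by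
      rw [← hpow]
      field_simp
    rw [this]
    linarith [htot]
  -- choose the minimizing θ0
  obtain ⟨θ0, hθ0Θ, hθ0min⟩ := Finset.exists_min_image Θ V ⟨θex, hθex⟩
  have hΘV : (Θ.card : ℝ) * V θ0 ≤ (E.card : ℝ) * (q : ℝ) ^ n := by
    calc (Θ.card : ℝ) * V θ0 = ∑ _θ ∈ Θ, V θ0 := by
          rw [Finset.sum_const, nsmul_eq_mul]
      _ ≤ ∑ θ ∈ Θ, V θ := Finset.sum_le_sum (fun θ hθ => hθ0min θ hθ)
      _ ≤ ∑ θ : Fin n → F, V θ :=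
          Finset.sum_le_sum_of_subset_of_nonneg (Finset.subset_univ Θ)
            (fun θ _ _ => hVnonneg θ)
      _ ≤ (E.card : ℝ) * (q : ℝ) ^ n := hSV
  -- Cauchy-Schwarz at θ0
  set f : ℝ := ((E.image (fun v : Fin (n + 1) → F =>
      ∑ i, v i * (Fin.snoc θ0 z : Fin (n + 1) → F) i)).card : ℝ) with hfdef
  have hfnonneg : (0 : ℝ) ≤ f := Nat.cast_nonneg _
  have hCS : (E.card : ℝ) ^ 2 ≤ f * ∑ t, (R θ0 t) ^ 2 := by
    have h1 : (E.card : ℝ) = ∑ t ∈ E.image (fun v : Fin (n + 1) → F =>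
        ∑ i, v i * (Fin.snoc θ0 z : Fin (n + 1) → F) i), R θ0 t := by
      have h := Finset.card_eq_sum_card_fiberwise (s := E)
        (f := fun v : Fin (n + 1) → F => ∑ i, v i * (Fin.snoc θ0 z : Fin (n + 1) → F) i)
        (t := E.image (fun v : Fin (n + 1) → F =>
          ∑ i, v i * (Fin.snoc θ0 z : Fin (n + 1) → F) i))
        (fun v hv => Finset.mem_image_of_mem _ hv)
      rw [hRdef, ← Nat.cast_sum]
      exact_mod_cast congrArg (Nat.cast (R := ℝ)) h
    have h2 := sq_sum_le_card_mul_sum_sq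
      (s := E.image (fun v : Fin (n + 1) → F =>
        ∑ i, v i * (Fin.snoc θ0 z : Fin (n + 1) → F) i)) (f := R θ0)
    have h3 : ∑ t ∈ E.image (fun v : Fin (n + 1) → F =>
          ∑ i, v i * (Fin.snoc θ0 z : Fin (n + 1) → F) i), (R θ0 t) ^ 2
        ≤ ∑ t, (R θ0 t) ^ 2 :=
      Finset.sum_le_sum_of_subset_of_nonneg (Finset.subset_univ _)
        (fun t _ _ => sq_nonneg _)
    calc (E.card : ℝ) ^ 2 = (∑ t ∈ E.image (fun v : Fin (n + 1) → F =>
            ∑ i, v i * (Fin.snoc θ0 z : Fin (n + 1) → F) i), R θ0 t) ^ 2 := by rw [← h1]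
      _ ≤ f * ∑ t ∈ E.image (fun v : Fin (n + 1) → F =>
            ∑ i, v i * (Fin.snoc θ0 z : Fin (n + 1) → F) i), (R θ0 t) ^ 2 := h2
      _ ≤ f * ∑ t, (R θ0 t) ^ 2 := by
          exact mul_le_mul_of_nonneg_left h3 hfnonneg
  rw [hVid θ0] at hCS
  -- final algebra
  refine ⟨θ0, hθ0Θ, ?_⟩
  have hD : (0 : ℝ) < (q : ℝ) ^ (n + 1) + (E.card : ℝ) * Θ.card :=
    add_pos_of_pos_of_nonneg (pow_pos hqR _)
      (mul_nonneg (Nat.cast_nonneg _) (Nat.cast_nonneg _))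
  rw [ge_iff_le, div_le_iff₀ hD]
  have key : (E.card : ℝ) * ((q : ℝ) * E.card * Θ.card)
      ≤ (E.card : ℝ) * (f * ((q : ℝ) ^ (n + 1) + (E.card : ℝ) * Θ.card)) := by
    have step1 : (E.card : ℝ) ^ 2 * ((q : ℝ) * Θ.card)
        ≤ (f * (V θ0 + (E.card : ℝ) ^ 2 / q)) * ((q : ℝ) * Θ.card) :=
      mul_le_mul_of_nonneg_right hCS (by positivity)
    have step2 : (f * (V θ0 + (E.card : ℝ) ^ 2 / q)) * ((q : ℝ) * Θ.card)
        = f * ((q : ℝ) * ((Θ.card : ℝ) * V θ0)) + f * (Θ.card : ℝ) * (E.card : ℝ) ^ 2 := by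
      field_simp
    have step3 : f * ((q : ℝ) * ((Θ.card : ℝ) * V θ0)) + f * (Θ.card : ℝ) * (E.card : ℝ) ^ 2
        ≤ f * ((q : ℝ) * ((E.card : ℝ) * (q : ℝ) ^ n)) + f * (Θ.card : ℝ) * (E.card : ℝ) ^ 2 :=
      add_le_add_left (mul_le_mul_of_nonneg_left
        (mul_le_mul_of_nonneg_left hΘV hqR.le) hfnonneg) _
    calc (E.card : ℝ) * ((q : ℝ) * E.card * Θ.card)
        = (E.card : ℝ) ^ 2 * ((q : ℝ) * Θ.card) := by ring
      _ ≤ f * ((q : ℝ) * ((E.card : ℝ) * (q : ℝ) ^ n)) + f * (Θ.card : ℝ) * (E.card : ℝ) ^ 2 := by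
          rw [step2] at step1
          linarith [step3]
      _ = (E.card : ℝ) * (f * ((q : ℝ) ^ (n + 1) + (E.card : ℝ) * Θ.card)) := by ring
  exact le_of_mul_le_mul_left key hER
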